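/- If L·Λ(θ) < 1, where Λ(θ) = 1/(4(θ−1)) for θ > 3 and Λ(θ) = 2/(1+θ)² for 0 < θ ≤ 3, then for any initial point (x₀,y₀) ∈ ℝ₊², the difference yₙ − xₙ of the trajectory (xₙ, yₙ) = Wⁿ(x₀, y₀) tends to 0 as n → ∞; hence every limit point of the trajectory lies on the diagonal {(x,y) : x = y}. -/

import Mathlib

noncomputable def Wmap (θ L : ℝ) (p : ℝ × ℝ) : ℝ × ℝ :=
  (L * ((1 + p.1) / (1 + θ + p.1 + p.2)) ^ 2,
   L * ((1 + p.2) / (1 + θ + p.1 + p.2)) ^ 2)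

noncomputable def Lambda (θ : ℝ) : ℝ :=
  if 3 < θ then 1 / (4 * (θ - 1)) else 2 / (1 + θ) ^ 2

lemma Lambda_pos {θ : ℝ} (hθ : 0 < θ) : 0 < Lambda θ := by
  unfold Lambda
  split_ifs with h
  · have : 0 < θ - 1 := by linarith
    positivity
  · have : 0 < 1 + θ := by linarith
    positivity

lemma key_ineq {θ : ℝ} (hθ : 0 < θ) {s : ℝ} (hs : 0 ≤ s) :
    (2 + s) / (1 + θ + s) ^ 2 ≤ Lambda θ := by
  have hd : 0 < 1 + θ + s := by linarith
  unfold Lambda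
  split_ifs with h
  · rw [div_le_div_iff₀ (by positivity) (by nlinarith)]
    nlinarith [sq_nonneg (s + 3 - θ)]
  · push_neg at h
    rw [div_le_div_iff₀ (by positivity) (by positivity)]
    nlinarith [mul_nonneg hs (mul_nonneg (by linarith : (0:ℝ) ≤ 1 + θ)
      (by linarith : (0:ℝ) ≤ 3 - θ))]

lemma key {θ L : ℝ} (hθ : 0 < θ) (hL : 0 < L) {x y : ℝ} (hx : 0 ≤ x) (hy : 0 ≤ y) :
    |(Wmap θ L (x, y)).2 - (Wmap θ L (x, y)).1| ≤ L * Lambda θ * |y - x| := by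
  have hd : 0 < 1 + θ + x + y := by linarith
  have heq : (Wmap θ L (x, y)).2 - (Wmap θ L (x, y)).1
      = L * ((2 + (x + y)) / (1 + θ + (x + y)) ^ 2) * (y - x) := by
    simp only [Wmap]
    field_simp
    ring
  rw [heq, abs_mul]
  have hc : 0 ≤ L * ((2 + (x + y)) / (1 + θ + (x + y)) ^ 2) := by positivity
  rw [abs_of_nonneg hc]
  have := key_ineq hθ (by linarith : (0:ℝ) ≤ x + y)
  have : L * ((2 + (x + y)) / (1 + θ + (x + y)) ^ 2) ≤ L * Lambda θ := by
    apply mul_le_mul_of_nonneg_left this hL.le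
  exact mul_le_mul_of_nonneg_right this (abs_nonneg _)

theorem limit_points_on_diagonal (θ L : ℝ) (hθ : 0 < θ) (hL : 0 < L)
    (hLam : L * Lambda θ < 1)
    (x₀ y₀ : ℝ) (hx₀ : 0 < x₀) (hy₀ : 0 < y₀) :
    Filter.Tendsto
      (fun n => ((Wmap θ L)^[n] (x₀, y₀)).2 - ((Wmap θ L)^[n] (x₀, y₀)).1)
      Filter.atTop (nhds 0) ∧
    ∀ p : ℝ × ℝ, MapClusterPt p Filter.atTop (fun n => (Wmap θ L)^[n] (x₀, y₀)) →
      p.1 = p.2 := by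
  set u : ℕ → ℝ × ℝ := fun n => (Wmap θ L)^[n] (x₀, y₀) with hu
  have hpos : ∀ n, 0 < (u n).1 ∧ 0 < (u n).2 := by
    intro n
    induction n with
    | zero => exact ⟨hx₀, hy₀⟩
    | succ n ih =>
      have h1 : u (n + 1) = Wmap θ L (u n) := Function.iterate_succ_apply' _ _ _
      obtain ⟨h1', h2'⟩ := ih
      have hd : 0 < 1 + θ + (u n).1 + (u n).2 := by linarith
      rw [h1]
      constructor
      · simp only [Wmap]; positivity
      · simp only [Wmap]; positivity
  have hq : 0 ≤ L * Lambda θ := by exact mul_nonneg hL.le (Lambda_pos hθ).le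
  have hbound : ∀ n, |(u n).2 - (u n).1| ≤ (L * Lambda θ) ^ n * |y₀ - x₀| := by
    intro n
    induction n with
    | zero => simp [hu]
    | succ n ih =>
      have h1 : u (n + 1) = Wmap θ L (u n) := Function.iterate_succ_apply' _ _ _
      obtain ⟨h1', h2'⟩ := hpos n
      have hk := key hθ hL h1'.le h2'.le
      rw [h1]
      calc |(Wmap θ L (u n)).2 - (Wmap θ L (u n)).1|
          = |(Wmap θ L ((u n).1, (u n).2)).2 - (Wmap θ L ((u n).1, (u n).2)).1| := by
            rw [Prod.mk.eta]
        _ ≤ L * Lambda θ * |(u n).2 - (u n).1| := hk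
        _ ≤ L * Lambda θ * ((L * Lambda θ) ^ n * |y₀ - x₀|) :=
            mul_le_mul_of_nonneg_left ih hq
        _ = (L * Lambda θ) ^ (n + 1) * |y₀ - x₀| := by ring
  have hgeo : Filter.Tendsto (fun n => (L * Lambda θ) ^ n * |y₀ - x₀|)
      Filter.atTop (nhds 0) := by
    have := (tendsto_pow_atTop_nhds_zero_of_lt_one hq hLam).mul_const |y₀ - x₀|
    simpa using this
  have htend : Filter.Tendsto (fun n => (u n).2 - (u n).1) Filter.atTop (nhds 0) :=
    squeeze_zero_norm (fun n => by simpa [Real.norm_eq_abs] using hbound n) hgeo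
  refine ⟨htend, ?_⟩
  intro p hp
  have h2 : MapClusterPt (p.2 - p.1) Filter.atTop ((fun q : ℝ × ℝ => q.2 - q.1) ∘ u) :=
    hp.continuousAt_comp ((continuous_snd.sub continuous_fst).continuousAt)
  have h3 : ClusterPt (p.2 - p.1) (nhds 0) :=
    (h2.clusterPt).mono (by exact htend)
  have h4 : p.2 - p.1 = 0 := eq_of_nhds_neBot h3
  linarith
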